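/- arXiv:0806.3559 — 2 statements merged into one kernel-verified Lean document; each statement's English description precedes it below -/
import Mathlib

section
/- Let Ω = {0,1,…,9}, let Ψ : Ω^ℕ → ℝ be defined by Ψ((a_j)_{j≥1}) = Σ_{j=1}^∞ a_j·10^{-j}, and let 𝒟 denote the product σ-algebra on Ω^ℕ (where Ω carries the σ-algebra of all subsets). Then the family of image sets {Ψ(A) : A ∈ 𝒟} is exactly the Borel σ-algebra of [0,1]; in particular, the image of every product-measurable subset of Ω^ℕ under Ψ is a Borel subset of [0,1], and every Borel subset of [0,1] arises as such an image. -/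
open MeasureTheory

noncomputable def Psi : (ℕ → Fin 10) → ℝ :=
  fun a => ∑' j : ℕ, (a j : ℝ) / 10 ^ (j + 1)

section aux

lemma nine_summable : Summable (fun j : ℕ => (9:ℝ) / 10 ^ (j + 1)) := by
  have h := (summable_geometric_of_lt_one (by norm_num : (0:ℝ) ≤ 1/10)
    (by norm_num : (1:ℝ)/10 < 1)).mul_left (9/10)
  refine h.congr fun j => ?_
  rw [div_pow, one_pow, pow_succ]
  field_simp

lemma nine_tsum : ∑' j : ℕ, (9:ℝ) / 10 ^ (j + 1) = 1 := by
  have h1 : ∑' j : ℕ, ((1:ℝ)/10) ^ j = (1 - 1/10)⁻¹ :=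
    tsum_geometric_of_lt_one (by norm_num) (by norm_num)
  calc ∑' j : ℕ, (9:ℝ) / 10 ^ (j + 1)
      = ∑' j : ℕ, (9/10) * ((1:ℝ)/10) ^ j := by
        refine tsum_congr fun j => ?_
        rw [div_pow, one_pow, pow_succ]
        field_simp
    _ = (9/10) * (1 - 1/10)⁻¹ := by rw [tsum_mul_left, h1]
    _ = 1 := by norm_num

lemma psi_summable (a : ℕ → Fin 10) : Summable (fun j : ℕ => (a j : ℝ) / 10 ^ (j + 1)) := by
  refine Summable.of_nonneg_of_le (fun j => by positivity) (fun j => ?_) nine_summable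
  have : (a j : ℝ) ≤ 9 := by
    have := (a j).is_lt
    exact_mod_cast Nat.lt_succ_iff.mp this
  gcongr

lemma psi_nonneg (a : ℕ → Fin 10) : 0 ≤ Psi a :=
  tsum_nonneg fun j => by positivity

lemma psi_le_one (a : ℕ → Fin 10) : Psi a ≤ 1 := by
  rw [← nine_tsum]
  refine Summable.tsum_le_tsum (fun j => ?_) (psi_summable a) nine_summable
  have : (a j : ℝ) ≤ 9 := by
    have := (a j).is_lt
    exact_mod_cast Nat.lt_succ_iff.mp this
  gcongr

lemma continuous_psi : Continuous Psi := by
  refine continuous_tsum (f := fun j (a : ℕ → Fin 10) => (a j : ℝ) / 10 ^ (j + 1))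
    (fun j => ?_) nine_summable (fun j a => ?_)
  · exact ((continuous_of_discreteTopology (f := fun x : Fin 10 => (x : ℝ))).comp
      (continuous_apply j)).div_const _
  · rw [Real.norm_eq_abs, abs_of_nonneg (by positivity)]
    have : (a j : ℝ) ≤ 9 := by
      have := (a j).is_lt
      exact_mod_cast Nat.lt_succ_iff.mp this
    show (a j : ℝ) / 10 ^ (j + 1) ≤ 9 / 10 ^ (j + 1)
    gcongr

/-- tail sum bound -/
lemma tail_tsum_nine (n : ℕ) : ∑' k : ℕ, (9:ℝ) / 10 ^ (k + n + 1) = 1 / 10 ^ n := by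
  have : ∀ k : ℕ, (9:ℝ) / 10 ^ (k + n + 1) = (1 / 10 ^ n) * (9 / 10 ^ (k + 1)) := by
    intro k
    rw [pow_add, pow_add]
    field_simp
    ring
  rw [tsum_congr this, tsum_mul_left, nine_tsum, mul_one]

lemma psi_split (a : ℕ → Fin 10) (n : ℕ) :
    Psi a = (∑ j ∈ Finset.range n, (a j : ℝ) / 10 ^ (j + 1))
      + ∑' k : ℕ, (a (k + n) : ℝ) / 10 ^ (k + n + 1) := by
  exact (Summable.sum_add_tsum_nat_add n (psi_summable a)).symm

lemma tail_le (a : ℕ → Fin 10) (n : ℕ) :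
    ∑' k : ℕ, (a (k + n) : ℝ) / 10 ^ (k + n + 1) ≤ 1 / 10 ^ n := by
  rw [← tail_tsum_nine n]
  refine Summable.tsum_le_tsum (fun k => ?_) ((psi_summable a).comp_injective (add_left_injective n))
    (nine_summable.comp_injective (add_left_injective n) |>.congr ?_)
  · have : (a (k + n) : ℝ) ≤ 9 := by
      have := (a (k + n)).is_lt
      exact_mod_cast Nat.lt_succ_iff.mp this
    gcongr
  · intro k; rfl

lemma tail_lt (a : ℕ → Fin 10) (n : ℕ) (m : ℕ) (hm : n ≤ m) (h9 : a m ≠ 9) :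
    ∑' k : ℕ, (a (k + n) : ℝ) / 10 ^ (k + n + 1) < 1 / 10 ^ n := by
  rw [← tail_tsum_nine n]
  have hbound : ∀ k, (a (k + n) : ℝ) ≤ 9 := fun k => by
    have := (a (k + n)).is_lt
    exact_mod_cast Nat.lt_succ_iff.mp this
  refine Summable.tsum_lt_tsum_of_nonneg (i := m - n) (fun k => by positivity)
    (fun k => by gcongr; exact hbound k) ?_
    (nine_summable.comp_injective (add_left_injective n) |>.congr (fun k => rfl))
  have hmn : m - n + n = m := Nat.sub_add_cancel hm
  rw [hmn]
  have : (a m : ℝ) < 9 := by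
    have h1 : (a m).val < 9 := lt_of_le_of_ne (Nat.lt_succ_iff.mp (a m).is_lt)
      (fun h => h9 (Fin.ext h))
    exact_mod_cast h1
  gcongr

/-- strict monotonicity for digit sequences -/
lemma psi_lt (a b : ℕ → Fin 10) (n : ℕ) (hlt : ∀ j < n, a j = b j) (hn : a n < b n)
    (h9 : ∃ m, n < m ∧ a m ≠ 9) : Psi a < Psi b := by
  obtain ⟨m, hm, hm9⟩ := h9
  rw [psi_split a (n+1), psi_split b (n+1)]
  have hS : ∑ j ∈ Finset.range n, (a j : ℝ) / 10 ^ (j + 1)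
      = ∑ j ∈ Finset.range n, (b j : ℝ) / 10 ^ (j + 1) := by
    refine Finset.sum_congr rfl fun j hj => ?_
    rw [hlt j (Finset.mem_range.mp hj)]
  rw [Finset.sum_range_succ, Finset.sum_range_succ, hS]
  have h1 : ∑' k : ℕ, (a (k + (n+1)) : ℝ) / 10 ^ (k + (n+1) + 1) < 1 / 10 ^ (n + 1) :=
    tail_lt a (n+1) m hm hm9
  have h2 : (0:ℝ) ≤ ∑' k : ℕ, (b (k + (n+1)) : ℝ) / 10 ^ (k + (n+1) + 1) :=
    tsum_nonneg fun k => by positivity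
  have h3 : (a n : ℝ) + 1 ≤ (b n : ℝ) := by
    have : (a n).val + 1 ≤ (b n).val := hn
    exact_mod_cast this
  have h4 : (a n : ℝ) / 10 ^ (n + 1) + 1 / 10 ^ (n+1) ≤ (b n : ℝ) / 10 ^ (n + 1) := by
    rw [← add_div]
    gcongr
  linarith

def E9 : Set (ℕ → Fin 10) := {a | ∃ n, ∀ m, n ≤ m → a m = 9}

lemma E9_countable : Set.Countable E9 := by
  have : E9 = ⋃ n : ℕ, {a : ℕ → Fin 10 | ∀ m, n ≤ m → a m = 9} := by
    ext a; simp [E9]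
  rw [this]
  refine Set.countable_iUnion fun n => ?_
  have hsub : {a : ℕ → Fin 10 | ∀ m, n ≤ m → a m = 9}
      ⊆ Set.range (fun (v : Fin n → Fin 10) (m : ℕ) =>
        if h : m < n then v ⟨m, h⟩ else 9) := by
    intro a ha
    refine ⟨fun i => a i, ?_⟩
    funext m
    by_cases h : m < n
    · simp [h]
    · simp only [dif_neg h]
      exact (ha m (le_of_not_gt h)).symm
  exact (Set.countable_range _).mono hsub

lemma psi_injOn : Set.InjOn Psi E9ᶜ := by
  intro a ha b hb hab
  by_contra hne
  have hex : ∃ j, a j ≠ b j := by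
    by_contra h
    push_neg at h
    exact hne (funext h)
  classical
  set n := Nat.find hex with hn
  have hdiff : a n ≠ b n := Nat.find_spec hex
  have heq : ∀ j < n, a j = b j := fun j hj => by
    by_contra h
    exact Nat.find_min hex hj h
  have hwita : ∀ k, ∃ m, k ≤ m ∧ a m ≠ 9 := by
    intro k
    by_contra h
    push_neg at h
    exact ha ⟨k, h⟩
  have hwitb : ∀ k, ∃ m, k ≤ m ∧ b m ≠ 9 := by
    intro k
    by_contra h
    push_neg at h
    exact hb ⟨k, h⟩
  rcases lt_or_gt_of_ne hdiff with h | h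
  · obtain ⟨m, hm, hm9⟩ := hwita (n + 1)
    exact absurd hab (ne_of_lt (psi_lt a b n heq h ⟨m, hm, hm9⟩))
  · obtain ⟨m, hm, hm9⟩ := hwitb (n + 1)
    exact absurd hab.symm (ne_of_lt (psi_lt b a n (fun j hj => (heq j hj).symm) h ⟨m, hm, hm9⟩))

lemma E9_measurable : MeasurableSet E9 := E9_countable.measurableSet

/-- surjectivity: range of Psi is [0,1] -/
lemma psi_surj : Set.range Psi = Set.Icc (0:ℝ) 1 := by
  apply Set.Subset.antisymm
  · rintro _ ⟨a, rfl⟩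
    exact ⟨psi_nonneg a, psi_le_one a⟩
  · rintro x ⟨hx0, hx1⟩
    rcases eq_or_lt_of_le hx1 with rfl | hx1
    · refine ⟨fun _ => 9, ?_⟩
      show Psi _ = 1
      rw [Psi]
      rw [← nine_tsum]
      apply tsum_congr
      intro j
      norm_num [show ((9:Fin 10) : ℕ) = 9 from rfl]
    -- now 0 ≤ x < 1
    · set m : ℕ → ℤ := fun n => ⌊x * 10 ^ n⌋ with hm
      have hm_le : ∀ n, (m n : ℝ) ≤ x * 10 ^ n := fun n => Int.floor_le _
      have hm_lt : ∀ n, x * 10 ^ n < m n + 1 := fun n => Int.lt_floor_add_one _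
      have hm_nonneg : ∀ n, 0 ≤ m n := fun n => Int.floor_nonneg.mpr (by positivity)
      have hstep : ∀ n, 10 * m n ≤ m (n+1) ∧ m (n+1) < 10 * m n + 10 := by
        intro n
        constructor
        · rw [hm]
          refine Int.le_floor.mpr ?_
          push_cast
          calc (10:ℝ) * m n ≤ 10 * (x * 10 ^ n) := by
                have := hm_le n; linarith
            _ = x * 10 ^ (n+1) := by ring
        · refine Int.floor_lt.mpr ?_
          push_cast
          have := hm_lt n
          calc x * 10 ^ (n+1) = 10 * (x * 10 ^ n) := by ring
            _ < 10 * (↑(m n) + 1) := by linarith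
            _ = 10 * ↑(m n) + 10 := by ring
      have hd : ∀ n, ((m (n+1) - 10 * m n).toNat < 10) := by
        intro n
        have := hstep n
        omega
      set a : ℕ → Fin 10 := fun n => ⟨(m (n+1) - 10 * m n).toNat, hd n⟩ with ha
      have hcast : ∀ n, (a n : ℝ) = (m (n+1) : ℝ) - 10 * m n := by
        intro n
        have h1 : ((m (n+1) - 10 * m n).toNat : ℤ) = m (n+1) - 10 * m n := by
          have := (hstep n).1
          omega
        have : ((a n : ℕ) : ℤ) = m (n+1) - 10 * m n := h1
        exact_mod_cast congrArg (Int.cast : ℤ → ℝ) this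
      have hm0 : m 0 = 0 := by
        rw [hm]
        simp only [pow_zero, mul_one]
        exact Int.floor_eq_zero_iff.mpr ⟨hx0, hx1⟩
      have hpartial : ∀ n, ∑ j ∈ Finset.range n, (a j : ℝ) / 10 ^ (j + 1)
          = (m n : ℝ) / 10 ^ n := by
        intro n
        induction n with
        | zero => simp [hm0]
        | succ k ih =>
          rw [Finset.sum_range_succ, ih, hcast k]
          field_simp
          ring
      have htend : Filter.Tendsto (fun n => ∑ j ∈ Finset.range n, (a j : ℝ) / 10 ^ (j + 1))
          Filter.atTop (nhds x) := by
        have hgeo : Filter.Tendsto (fun n : ℕ => x - ((1:ℝ)/10) ^ n) Filter.atTop (nhds x) := by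
          have := tendsto_pow_atTop_nhds_zero_of_lt_one
            (by norm_num : (0:ℝ) ≤ 1/10) (by norm_num : (1:ℝ)/10 < 1)
          have h2 := (tendsto_const_nhds (x := x) (f := Filter.atTop (α := ℕ))).sub this
          simpa using h2
        refine tendsto_of_tendsto_of_tendsto_of_le_of_le hgeo tendsto_const_nhds ?_ ?_
        · intro n
          show x - ((1:ℝ)/10) ^ n ≤ ∑ j ∈ Finset.range n, (a j : ℝ) / 10 ^ (j + 1)
          rw [hpartial n]
          have h1 := hm_lt n
          have hpow : (0:ℝ) < 10 ^ n := by positivity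
          rw [div_pow, one_pow, sub_le_iff_le_add, ← add_div, le_div_iff₀ hpow]
          linarith
        · intro n
          show ∑ j ∈ Finset.range n, (a j : ℝ) / 10 ^ (j + 1) ≤ x
          rw [hpartial n]
          have hpow : (0:ℝ) < 10 ^ n := by positivity
          rw [div_le_iff₀ hpow]
          exact hm_le n
      refine ⟨a, ?_⟩
      have hsum := (psi_summable a).hasSum.tendsto_sum_nat
      exact tendsto_nhds_unique hsum htend

end aux

/-- the family of image sets `{Ψ(A) : A ∈ 𝒟}`, where `𝒟` is the product
σ-algebra on `(Fin 10)^ℕ` (with `Fin 10` carrying the σ-algebra of all subsets), is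
exactly the Borel σ-algebra of `[0,1]` (the trace on `[0,1]` of the Borel σ-algebra of
`ℝ`): the image of every product-measurable set is a Borel subset of `[0,1]`, and every
Borel subset of `[0,1]` arises as such an image.  A subset `s ⊆ [0,1]` corresponds to
the image `Ψ(A)` when `Subtype.val '' s = Ψ '' A`. -/
theorem images_of_measurable_eq_borel :
    {s : Set (Set.Icc (0 : ℝ) 1) | ∃ A : Set (ℕ → Fin 10),
        MeasurableSet A ∧ Subtype.val '' s = Psi '' A}
      = {s : Set (Set.Icc (0 : ℝ) 1) | MeasurableSet s} := by
  have hemb : MeasurableEmbedding (Subtype.val : Set.Icc (0:ℝ) 1 → ℝ) :=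
    MeasurableEmbedding.subtype_coe measurableSet_Icc
  ext s
  simp only [Set.mem_setOf_eq]
  constructor
  · rintro ⟨A, hA, hs⟩
    have hsplit : Psi '' A = Psi '' (A \ E9) ∪ Psi '' (A ∩ E9) := by
      rw [← Set.image_union, Set.diff_union_inter]
    have h1 : MeasurableSet (Psi '' (A \ E9)) := by
      haveI : PolishSpace (ℕ → Fin 10) := { }
      refine (hA.diff E9_measurable).image_of_continuousOn_injOn
        continuous_psi.continuousOn (psi_injOn.mono ?_)
      intro x hx
      exact hx.2
    have h2 : MeasurableSet (Psi '' (A ∩ E9)) :=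
      ((E9_countable.mono Set.inter_subset_right).image _).measurableSet
    have : MeasurableSet (Subtype.val '' s) := by
      rw [hs, hsplit]
      exact h1.union h2
    exact hemb.measurableSet_image.mp this
  · intro hmeas
    refine ⟨Psi ⁻¹' (Subtype.val '' s),
      continuous_psi.measurable (hemb.measurableSet_image.mpr hmeas), ?_⟩
    rw [Set.image_preimage_eq_inter_range, psi_surj]
    symm
    rw [Set.inter_eq_left]
    rintro _ ⟨y, _, rfl⟩
    exact y.2
end

section
/- Let Ω = {0,1,…,9}, let ρ be the probability measure on Ω with ρ({9}) = 1, let μ_ρ = ⊗ρ be the infinite product measure on Ω^ℕ, let Ψ : Ω^ℕ → ℝ be defined by Ψ((a_j)_{j≥1}) = Σ_{j=1}^∞ a_j·10^{-j}, and let λ_{μ_ρ} = Ψ_*(μ_ρ) be the pushforward measure on [0,1]. Let N_{μ_ρ} be the set of numbers η ∈ [0,1] that are normal with respect to λ_{μ_ρ}, i.e. η = Σ_{j=1}^∞ a_j·10^{-j} for a digit sequence (a_j)_{j≥1} with infinitely many a_j < 9 such that for every k ∈ ℕ and every word b_1…b_k of k digits, (1/n)·#{i ∈ {1,…,n} : a_{i+j-1}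 = b_j for all j = 1,…,k} converges to ∏_{j=1}^k ρ({b_j}) as n → ∞. Then λ_{μ_ρ}(N_{μ_ρ}) = 0. -/
open MeasureTheory Filter

def NormalSet (ρ : Measure (Fin 10)) : Set ℝ :=
  {x : ℝ | ∃ a : ℕ → Fin 10,
    x = Psi a ∧ {j : ℕ | (a j : ℕ) < 9}.Infinite ∧
    ∀ (k : ℕ) (b : Fin k → Fin 10), 1 ≤ k →
      Tendsto
        (fun n : ℕ =>
          (({i | i < n ∧ ∀ j : Fin k, a (i + j) = b j} : Set ℕ).ncard : ℝ) / n)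
        atTop (nhds (∏ j : Fin k, (ρ {b j}).toReal))}

lemma nine_eq (j : ℕ) : (9 : ℝ) / 10 ^ (j + 1) = (9 / 10) * (1 / 10) ^ j := by
  rw [pow_succ]
  field_simp
  rw [← mul_pow]; norm_num

lemma summable_nine : Summable (fun j : ℕ => (9 : ℝ) / 10 ^ (j + 1)) := by
  simp_rw [nine_eq]
  exact (summable_geometric_of_lt_one (by norm_num) (by norm_num)).mul_left _

lemma sum_nine : ∑' j : ℕ, (9 : ℝ) / 10 ^ (j + 1) = 1 := by
  simp_rw [nine_eq]
  rw [tsum_mul_left, tsum_geometric_of_lt_one (by norm_num) (by norm_num)]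
  norm_num

lemma digit_le (a : ℕ → Fin 10) (j : ℕ) :
    ((a j : ℕ) : ℝ) / 10 ^ (j + 1) ≤ (9 : ℝ) / 10 ^ (j + 1) := by
  have h9 : ((a j : ℕ) : ℝ) ≤ 9 := by
    have := (a j).is_lt
    exact_mod_cast Nat.lt_succ_iff.mp this
  exact div_le_div_of_nonneg_right h9 (by positivity) |>.trans_eq rfl

lemma summable_digits (a : ℕ → Fin 10) :
    Summable (fun j : ℕ => ((a j : ℕ) : ℝ) / 10 ^ (j + 1)) :=
  Summable.of_nonneg_of_le (fun j => by positivity) (digit_le a) summable_nine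

lemma one_not_mem (ρ : Measure (Fin 10)) : (1 : ℝ) ∉ NormalSet ρ := by
  rintro ⟨a, ha, hinf, -⟩
  obtain ⟨j0, hj0⟩ := hinf.nonempty
  have hj0' : ((a j0 : ℕ) : ℝ) < 9 := by exact_mod_cast hj0
  have hlt : Psi a < 1 := by
    rw [← sum_nine]
    exact Summable.tsum_lt_tsum (fun j => digit_le a j)
      ((div_lt_div_iff_of_pos_right (by positivity : (0:ℝ) < 10 ^ (j0 + 1))).mpr hj0')
      (summable_digits a) summable_nine
  rw [← ha] at hlt
  exact absurd hlt (lt_irrefl 1)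

/-- if `ρ` is a probability measure on `Ω = {0,…,9}` with `ρ {9} = 1`,
`μ_ρ = ⊗ρ` is the infinite product measure on `Ω^ℕ` (characterized by its
finite-dimensional marginals) and `λ_{μ_ρ} = Ψ_*(μ_ρ)`, then the set of numbers in
`[0,1]` that are normal with respect to `λ_{μ_ρ}` has `λ_{μ_ρ}`-measure `0`. -/
theorem normalSet_measure_zero
    (ρ : Measure (Fin 10)) [IsProbabilityMeasure ρ] (hρ : ρ {9} = 1)
    (μ : Measure (ℕ → Fin 10)) [IsProbabilityMeasure μ]
    (hμ : ∀ n : ℕ, Measure.map (fun w (i : Fin n) => w (i : ℕ)) μ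
        = Measure.pi (fun _ : Fin n => ρ)) :
    Measure.map Psi μ (NormalSet ρ) = 0 := by
  have hρc : ρ ({9}ᶜ) = 0 := by
    have := measure_compl (measurableSet_singleton (9 : Fin 10)) (measure_ne_top ρ _)
    simp [hρ, this]
  have h0 : ∀ i : ℕ, μ {w : ℕ → Fin 10 | w i ≠ 9} = 0 := by
    intro i
    have hmeas : Measurable (fun (w : ℕ → Fin 10) (j : Fin (i + 1)) => w (j : ℕ)) :=
      measurable_pi_lambda _ fun j => measurable_pi_apply _
    set k : Fin (i + 1) := ⟨i, Nat.lt_succ_self i⟩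
    have hS : MeasurableSet ((fun f : Fin (i + 1) → Fin 10 => f k) ⁻¹' ({(9 : Fin 10)}ᶜ)) :=
      (measurable_pi_apply k) (measurableSet_singleton (9 : Fin 10)).compl
    have hmap := Measure.map_apply hmeas hS (μ := μ)
    rw [hμ (i + 1)] at hmap
    have hpi : Measure.pi (fun _ : Fin (i + 1) => ρ)
        ((fun f : Fin (i + 1) → Fin 10 => f k) ⁻¹' ({(9 : Fin 10)}ᶜ)) = 0 :=
      Measure.pi_eval_preimage_null _ hρc
    rw [hpi] at hmap
    have heq : {w : ℕ → Fin 10 | w i ≠ 9}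
        = (fun (w : ℕ → Fin 10) (j : Fin (i + 1)) => w (j : ℕ)) ⁻¹'
          ((fun f : Fin (i + 1) → Fin 10 => f k) ⁻¹' ({(9 : Fin 10)}ᶜ)) := by
      ext w
      simp [k]
    rw [heq]
    exact hmap.symm
  have hae : ∀ᵐ w ∂μ, ∀ i : ℕ, w i = 9 := by
    rw [ae_all_iff]
    intro i
    exact h0 i
  have hPsi : ∀ᵐ w ∂μ, Psi w = 1 := by
    filter_upwards [hae] with w hw
    unfold Psi
    simp_rw [hw]
    simpa using sum_nine
  have hmap : Measure.map Psi μ = Measure.dirac 1 := by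
    rw [Measure.map_congr (g := fun _ => (1 : ℝ)) hPsi, Measure.map_const]
    simp
  rw [hmap, Measure.dirac_apply]
  simp [Set.indicator_of_notMem (one_not_mem ρ)]
end
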